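/- (Lower bound of Proposition 2.) Let λ > 0 be real, and set r_lo = ⌊1/(√2·λ)⌋ and r_up = ⌈1/(√2·λ)⌉. Assume 1/(√2·λ) is not an integer (so r_lo < r_up) and assume 2·r_up·λ ≥ √3. Then ∑_{j=1}^{∞} v(j,λ) ≥ [if r_lo ≥ 1 then (w(r_lo − 1,λ) + v(r_lo,λ)) else 0] + v(r_up,λ) + (r_up + 1)·exp(−2(r_up+1)²λ²), where v(r,λ) = (4r²λ² − 1)·exp(−2r²λ²) and w(r,λ) = −r·exp(−2r²λ²). Consequently the Kuiper p-value KD = 2∑_{j=1}^∞ v(j,λ) is at least twice the right-hand side. -/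

import Mathlib

/-- `v(r,λ) = (4r²λ² - 1)·exp(-2r²λ²)`. -/
noncomputable def v (r l : ℝ) : ℝ := (4 * r ^ 2 * l ^ 2 - 1) * Real.exp (-2 * r ^ 2 * l ^ 2)

/-- `w(r,λ) = -r·exp(-2r²λ²)`, an antiderivative of `v(·,λ)`. -/
noncomputable def w (r l : ℝ) : ℝ := -r * Real.exp (-2 * r ^ 2 * l ^ 2)

open Real Set Filter

private noncomputable def gK (u : ℝ) : ℝ := (2 * u - 1) * Real.exp (-u)

private lemma gK_hasDeriv (u : ℝ) :
    HasDerivAt gK ((3 - 2 * u) * Real.exp (-u)) u := by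
  have h1 : HasDerivAt (fun u : ℝ => 2 * u - 1) 2 u := by
    simpa using ((hasDerivAt_id u).const_mul 2).sub_const 1
  have h2 : HasDerivAt (fun u : ℝ => Real.exp (-u)) (Real.exp (-u) * (-1)) u :=
    (Real.hasDerivAt_exp (-u)).comp u (hasDerivAt_neg u)
  have := h1.mul h2
  exact this.congr_deriv (by ring)

private lemma gK_cont : Continuous gK := by
  unfold gK; fun_prop

private lemma gK_mono : MonotoneOn gK (Set.Iic (3/2 : ℝ)) := by
  apply monotoneOn_of_deriv_nonneg (convex_Iic _) gK_cont.continuousOn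
  · intro x _; exact (gK_hasDeriv x).differentiableAt.differentiableWithinAt
  · intro x hx
    rw [(gK_hasDeriv x).deriv]
    rw [interior_Iic] at hx
    have : x < 3/2 := hx
    have h2 : (0:ℝ) ≤ 3 - 2 * x := by linarith
    positivity

private lemma gK_anti : AntitoneOn gK (Set.Ici (3/2 : ℝ)) := by
  apply antitoneOn_of_deriv_nonpos (convex_Ici _) gK_cont.continuousOn
  · intro x _; exact (gK_hasDeriv x).differentiableAt.differentiableWithinAt
  · intro x hx
    rw [(gK_hasDeriv x).deriv]
    rw [interior_Ici] at hx
    have : (3:ℝ)/2 < x := hx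
    have h2 : (3 - 2 * x : ℝ) ≤ 0 := by linarith
    have := Real.exp_nonneg (-x)
    nlinarith

private lemma v_eq_gK (r l : ℝ) : v r l = gK (2 * r ^ 2 * l ^ 2) := by
  unfold v gK
  rw [show -2 * r ^ 2 * l ^ 2 = -(2 * r ^ 2 * l ^ 2) by ring,
    show 4 * r ^ 2 * l ^ 2 - 1 = 2 * (2 * r ^ 2 * l ^ 2) - 1 by ring]

private lemma v_le_v_left {l a b : ℝ} (ha : 0 ≤ a) (hab : a ≤ b)
    (hb : 2 * b ^ 2 * l ^ 2 ≤ 3/2) : v a l ≤ v b l := by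
  rw [v_eq_gK, v_eq_gK]
  have hsq : a ^ 2 ≤ b ^ 2 := pow_le_pow_left₀ ha hab 2
  have hu : 2 * a ^ 2 * l ^ 2 ≤ 2 * b ^ 2 * l ^ 2 := by
    nlinarith [mul_nonneg (sub_nonneg.2 hsq) (sq_nonneg l)]
  exact gK_mono (Set.mem_Iic.mpr (hu.trans hb)) (Set.mem_Iic.mpr hb) hu

private lemma v_le_v_right {l a b : ℝ} (ha0 : 0 ≤ a) (ha : 3/2 ≤ 2 * a ^ 2 * l ^ 2)
    (hab : a ≤ b) : v b l ≤ v a l := by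
  rw [v_eq_gK, v_eq_gK]
  have hsq : a ^ 2 ≤ b ^ 2 := pow_le_pow_left₀ ha0 hab 2
  have hu : 2 * a ^ 2 * l ^ 2 ≤ 2 * b ^ 2 * l ^ 2 := by
    nlinarith [mul_nonneg (sub_nonneg.2 hsq) (sq_nonneg l)]
  exact gK_anti (Set.mem_Ici.mpr ha) (Set.mem_Ici.mpr (ha.trans hu)) hu

private lemma w_hasDeriv (l r : ℝ) : HasDerivAt (fun r => w r l) (v r l) r := by
  have hinner : HasDerivAt (fun r : ℝ => -2 * r ^ 2 * l ^ 2) (-4 * r * l ^ 2) r := by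
    have : (fun r : ℝ => -2 * r ^ 2 * l ^ 2) = fun r : ℝ => (-2 * l ^ 2) * r ^ 2 := by
      funext x; ring
    rw [this]
    have := (hasDerivAt_pow 2 r).const_mul (-2 * l ^ 2)
    exact this.congr_deriv (by ring)
  have h2 : HasDerivAt (fun r : ℝ => Real.exp (-2 * r ^ 2 * l ^ 2))
      (Real.exp (-2 * r ^ 2 * l ^ 2) * (-4 * r * l ^ 2)) r :=
    (Real.hasDerivAt_exp _).comp r hinner
  have h1 : HasDerivAt (fun r : ℝ => -r) (-1) r := by
    exact hasDerivAt_neg r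
  have := h1.mul h2
  exact this.congr_deriv (by unfold v; ring)

private lemma v_cont (l : ℝ) : Continuous (fun x => v x l) := by
  unfold v; fun_prop

private lemma integ (l a b : ℝ) : ∫ x in a..b, v x l = w b l - w a l :=
  intervalIntegral.integral_eq_sub_of_hasDerivAt (fun x _ => w_hasDeriv l x)
    ((v_cont l).intervalIntegrable a b)

private lemma lower_step {l a : ℝ} (ha : 0 ≤ a) (hcond : 2 * (a+1) ^ 2 * l ^ 2 ≤ 3/2) :
    w (a+1) l - w a l ≤ v (a+1) l := by
  rw [← integ]
  have hab : a ≤ a + 1 := by linarith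
  calc ∫ x in a..(a+1), v x l ≤ ∫ _x in a..(a+1), v (a+1) l := by
        apply intervalIntegral.integral_mono_on hab ((v_cont l).intervalIntegrable a (a+1))
          (intervalIntegrable_const)
        intro x hx
        exact v_le_v_left (le_trans ha hx.1) hx.2 hcond
    _ = v (a+1) l := by simp

private lemma upper_step {l a : ℝ} (ha0 : 0 ≤ a) (hcond : 3/2 ≤ 2 * a ^ 2 * l ^ 2) :
    w (a+1) l - w a l ≤ v a l := by
  rw [← integ]
  have hab : a ≤ a + 1 := by linarith
  calc ∫ x in a..(a+1), v x l ≤ ∫ _x in a..(a+1), v a l := by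
        apply intervalIntegral.integral_mono_on hab ((v_cont l).intervalIntegrable a (a+1))
          (intervalIntegrable_const)
        intro x hx
        exact v_le_v_right ha0 hcond hx.1
    _ = v a l := by simp

private lemma v_summable {l : ℝ} (hl : 0 < l) : Summable (fun j : ℕ => v ((j:ℝ) + 1) l) := by
  set q : ℝ := Real.exp (-(2 * l ^ 2)) with hq
  have hq0 : 0 ≤ q := (Real.exp_pos _).le
  have hq1 : q < 1 := by rw [hq, Real.exp_lt_one_iff]; nlinarith [sq_nonneg l]
  have hqn : ‖q‖ < 1 := by rwa [Real.norm_eq_abs, abs_of_nonneg hq0]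
  have hmaj : Summable (fun j : ℕ => (4 * l ^ 2 + 1) * (((j:ℝ) + 1) ^ 2 * q ^ j)) := by
    apply Summable.mul_left
    have h2 : Summable (fun j : ℕ => ((j:ℝ)) ^ 2 * q ^ j) :=
      summable_pow_mul_geometric_of_norm_lt_one 2 hqn
    have h1 : Summable (fun j : ℕ => ((j:ℝ)) ^ 1 * q ^ j) :=
      summable_pow_mul_geometric_of_norm_lt_one 1 hqn
    have h0 : Summable (fun j : ℕ => q ^ j) := summable_geometric_of_lt_one hq0 hq1
    apply (h2.add ((h1.mul_left 2).add h0)).congr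
    intro j; push_cast; ring
  apply Summable.of_norm_bounded hmaj
  intro j
  have hr2 : (1:ℝ) ≤ ((j:ℝ) + 1) ^ 2 := by nlinarith [(Nat.cast_nonneg j : (0:ℝ) ≤ j)]
  have hp : (0:ℝ) ≤ q ^ j := pow_nonneg hq0 j
  have e1 : ‖v ((j:ℝ)+1) l‖ ≤ (4 * ((j:ℝ)+1) ^ 2 * l ^ 2 + 1) *
      Real.exp (-2 * ((j:ℝ)+1) ^ 2 * l ^ 2) := by
    rw [v, Real.norm_eq_abs, abs_mul, Real.abs_exp]
    apply mul_le_mul_of_nonneg_right _ (Real.exp_nonneg _)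
    rw [abs_le]
    constructor
    · nlinarith [mul_nonneg (mul_nonneg (by norm_num : (0:ℝ) ≤ 4) (sq_nonneg ((j:ℝ)+1))) (sq_nonneg l)]
    · linarith
  have e2 : Real.exp (-2 * ((j:ℝ)+1) ^ 2 * l ^ 2) ≤ q ^ j := by
    rw [hq, ← Real.exp_nat_mul]
    apply Real.exp_le_exp.mpr
    have hj : (j:ℝ) ≤ ((j:ℝ)+1) ^ 2 := by nlinarith [(Nat.cast_nonneg j : (0:ℝ) ≤ j)]
    nlinarith [mul_nonneg (sub_nonneg.2 hj) (sq_nonneg l)]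
  calc ‖v ((j:ℝ)+1) l‖ ≤ (4 * ((j:ℝ)+1) ^ 2 * l ^ 2 + 1) * q ^ j :=
        le_trans e1 (mul_le_mul_of_nonneg_left e2 (by positivity))
    _ ≤ (4 * l ^ 2 + 1) * (((j:ℝ)+1) ^ 2 * q ^ j) := by
        rw [← mul_assoc]
        apply mul_le_mul_of_nonneg_right _ hp
        nlinarith [mul_nonneg (sub_nonneg.2 hr2) (sq_nonneg l)]

private lemma w_tendsto {l : ℝ} (hl : 0 < l) :
    Filter.Tendsto (fun x : ℝ => w x l) Filter.atTop (nhds 0) := by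
  have key : Filter.Tendsto (fun x : ℝ => x * Real.exp (-(2 * l ^ 2) * x))
      Filter.atTop (nhds 0) := by
    have := tendsto_rpow_mul_exp_neg_mul_atTop_nhds_zero 1 (2 * l ^ 2) (by positivity)
    refine this.congr' ?_
    filter_upwards [Filter.eventually_ge_atTop (0:ℝ)] with x hx
    rw [Real.rpow_one]
  apply squeeze_zero_norm' ?_ key
  filter_upwards [Filter.eventually_ge_atTop (1:ℝ)] with x hx
  rw [w, Real.norm_eq_abs, abs_mul, abs_neg, abs_of_nonneg (by linarith : (0:ℝ) ≤ x),
    Real.abs_exp]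
  apply mul_le_mul_of_nonneg_left _ (by linarith : (0:ℝ) ≤ x)
  apply Real.exp_le_exp.mpr
  nlinarith [mul_nonneg (sq_nonneg l) (mul_nonneg (by linarith : (0:ℝ) ≤ x) (by linarith : (0:ℝ) ≤ x - 1))]

private lemma tail_bound {l : ℝ} (hl : 0 < l) (a : ℝ) (ha0 : 0 ≤ a)
    (hcond : 3/2 ≤ 2 * a ^ 2 * l ^ 2)
    (hs : Summable (fun i : ℕ => v ((i:ℝ) + a + 1) l)) :
    -w (a + 1) l ≤ ∑' i : ℕ, v ((i:ℝ) + a + 1) l := by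
  have hlim : Filter.Tendsto (fun N : ℕ => ∑ i ∈ Finset.range N, v ((i:ℝ) + a + 1) l)
      Filter.atTop (nhds (∑' i : ℕ, v ((i:ℝ) + a + 1) l)) := hs.hasSum.tendsto_sum_nat
  have hlow : Filter.Tendsto (fun N : ℕ => w (a + 1 + (N:ℝ)) l - w (a+1) l)
      Filter.atTop (nhds (-w (a+1) l)) := by
    have h1 : Filter.Tendsto (fun N : ℕ => w (a + 1 + (N:ℝ)) l) Filter.atTop (nhds 0) :=
      (w_tendsto hl).comp
        (Filter.tendsto_atTop_add_const_left Filter.atTop (a+1) tendsto_natCast_atTop_atTop)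
    simpa using h1.sub_const (w (a+1) l)
  refine le_of_tendsto_of_tendsto' hlow hlim ?_
  intro N
  have tel : ∑ i ∈ Finset.range N, (w (a+1+((i:ℝ)+1)) l - w (a+1+(i:ℝ)) l)
      = w (a+1+(N:ℝ)) l - w (a+1) l := by
    have := Finset.sum_range_sub (f := fun i : ℕ => w (a+1+(i:ℝ)) l) N
    simp only [Nat.cast_add, Nat.cast_one] at this
    simpa using this
  rw [← tel]
  apply Finset.sum_le_sum
  intro i _
  have h1 : (0:ℝ) ≤ a + 1 + (i:ℝ) := by positivity
  have h2 : 3/2 ≤ 2 * (a + 1 + (i:ℝ)) ^ 2 * l ^ 2 := by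
    have hi : (0:ℝ) ≤ (i:ℝ) := Nat.cast_nonneg i
    nlinarith [mul_nonneg (sq_nonneg l) (mul_nonneg (by linarith : (0:ℝ) ≤ a + 1 + (i:ℝ) + a) (by linarith : (0:ℝ) ≤ 1 + (i:ℝ)))]
  have hstep := upper_step h1 h2
  have e1 : a + 1 + (i:ℝ) + 1 = a + 1 + ((i:ℝ) + 1) := by ring
  have e2 : a + 1 + (i:ℝ) = (i:ℝ) + a + 1 := by ring
  rw [e1, e2] at hstep
  calc w (a+1+((i:ℝ)+1)) l - w (a+1+(i:ℝ)) l
      = w (a+1+((i:ℝ)+1)) l - w ((i:ℝ)+a+1) l := by rw [e2]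
    _ ≤ v ((i:ℝ) + a + 1) l := hstep

private lemma low_bound {l : ℝ} (hl : 0 < l) (m : ℕ)
    (hcond : 2 * ((m:ℝ) + 1) ^ 2 * l ^ 2 ≤ 3/2) :
    w (m:ℝ) l + v ((m:ℝ)+1) l ≤ ∑ i ∈ Finset.range (m+1), v ((i:ℝ) + 1) l := by
  rw [Finset.sum_range_succ]
  have hmain : w (m:ℝ) l ≤ ∑ i ∈ Finset.range m, v ((i:ℝ)+1) l := by
    have tel : ∑ i ∈ Finset.range m, (w ((i:ℝ)+1) l - w (i:ℝ) l) = w (m:ℝ) l - w 0 l := by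
      have := Finset.sum_range_sub (f := fun i : ℕ => w (i:ℝ) l) m
      simp only [Nat.cast_add, Nat.cast_one] at this
      simpa using this
    have hw0 : w 0 l = 0 := by simp [w]
    rw [hw0, sub_zero] at tel
    rw [← tel]
    apply Finset.sum_le_sum
    intro i hi
    have hi' : (i:ℝ) + 1 ≤ (m:ℝ) + 1 := by
      have := Finset.mem_range.mp hi
      have : (i:ℝ) ≤ (m:ℝ) := by exact_mod_cast this.le
      linarith
    have hc : 2 * ((i:ℝ)+1) ^ 2 * l ^ 2 ≤ 3/2 := by
      have h0 : (0:ℝ) ≤ (i:ℝ) + 1 := by positivity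
      nlinarith [mul_nonneg (sq_nonneg l) (mul_nonneg (by linarith : (0:ℝ) ≤ (m:ℝ)+1+((i:ℝ)+1)) (sub_nonneg.2 hi'))]
    exact lower_step (Nat.cast_nonneg i) hc
  linarith


set_option maxHeartbeats 1000000 in
/-- Lower bound of Proposition 2: with `r_lo = ⌊1/(√2λ)⌋`, `r_up = ⌈1/(√2λ)⌉`,
`1/(√2λ)` not an integer and `2·r_up·λ ≥ √3`,
`∑_{j≥1} v(j,λ) ≥ [r_lo ≥ 1] (w(r_lo - 1,λ) + v(r_lo,λ)) + v(r_up,λ)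
  + (r_up+1)·exp(-2(r_up+1)²λ²)`,
and hence the Kuiper p-value `KD = 2∑_{j≥1} v(j,λ)` is at least twice the right-hand side. -/
theorem stmt_16 (l : ℝ) (hl : 0 < l) (r_lo r_up : ℕ)
    (hlo : r_lo = ⌊1 / (Real.sqrt 2 * l)⌋₊)
    (hup : r_up = ⌈1 / (Real.sqrt 2 * l)⌉₊)
    (hnotint : ∀ n : ℕ, (n : ℝ) ≠ 1 / (Real.sqrt 2 * l))
    (h : Real.sqrt 3 ≤ 2 * r_up * l) :
    (if 1 ≤ r_lo then w ((r_lo : ℝ) - 1) l + v r_lo l else 0) + v r_up l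
        + ((r_up : ℝ) + 1) * Real.exp (-2 * ((r_up : ℝ) + 1) ^ 2 * l ^ 2)
      ≤ (∑' j : ℕ, v ((j : ℝ) + 1) l) ∧
    2 * ((if 1 ≤ r_lo then w ((r_lo : ℝ) - 1) l + v r_lo l else 0) + v r_up l
        + ((r_up : ℝ) + 1) * Real.exp (-2 * ((r_up : ℝ) + 1) ^ 2 * l ^ 2))
      ≤ 2 * (∑' j : ℕ, v ((j : ℝ) + 1) l) := by
  have hs2 : (0:ℝ) < Real.sqrt 2 := Real.sqrt_pos.mpr (by norm_num)
  set x : ℝ := 1 / (Real.sqrt 2 * l) with hxdef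
  have hx0 : 0 < x := by positivity
  have hfl : (r_lo : ℝ) ≤ x := by rw [hlo]; exact Nat.floor_le hx0.le
  have hxu : x ≤ (r_up : ℝ) := by rw [hup]; exact Nat.le_ceil x
  have hne : (r_lo : ℝ) ≠ x := hnotint r_lo
  have hlt : (r_lo:ℝ) < (r_up:ℝ) := lt_of_lt_of_le (lt_of_le_of_ne hfl hne) hxu
  have hlt' : r_lo < r_up := by exact_mod_cast hlt
  have hle : r_up ≤ r_lo + 1 := by
    rw [hup]
    apply Nat.ceil_le.mpr
    have h1 := Nat.lt_floor_add_one x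
    rw [← hlo] at h1
    push_cast
    linarith
  have hupeq : r_up = r_lo + 1 := le_antisymm hle hlt'
  have cond_up : 3/2 ≤ 2 * (r_up:ℝ) ^ 2 * l ^ 2 := by
    have h3 : Real.sqrt 3 ^ 2 = 3 := Real.sq_sqrt (by norm_num)
    nlinarith [Real.sqrt_nonneg 3, h]
  have cond_lo : 2 * ((r_lo:ℝ)) ^ 2 * l ^ 2 ≤ 3/2 := by
    have h2 : Real.sqrt 2 ^ 2 = 2 := Real.sq_sqrt (by norm_num)
    have hmul : Real.sqrt 2 * l * (r_lo:ℝ) ≤ 1 := by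
      have hne0 : Real.sqrt 2 * l ≠ 0 := by positivity
      have := mul_le_mul_of_nonneg_left hfl (by positivity : (0:ℝ) ≤ Real.sqrt 2 * l)
      rw [hxdef, mul_one_div_cancel hne0] at this
      linarith
    have hs0 : (0:ℝ) ≤ Real.sqrt 2 * l * (r_lo:ℝ) := by positivity
    have hsq : (Real.sqrt 2 * l * (r_lo:ℝ)) ^ 2 ≤ 1 := by nlinarith
    have hexp : (Real.sqrt 2 * l * (r_lo:ℝ)) ^ 2 = 2 * ((r_lo:ℝ)) ^ 2 * l ^ 2 := by
      rw [mul_pow, mul_pow, h2]; ring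
    rw [hexp] at hsq
    linarith
  have hsumf := v_summable hl
  have hsplit := Summable.sum_add_tsum_nat_add (f := fun j : ℕ => v ((j:ℝ)+1) l) r_up hsumf
  have htail_eq : (fun i : ℕ => v ((↑(i + r_up):ℝ) + 1) l)
      = fun i : ℕ => v ((i:ℝ) + (r_up:ℝ) + 1) l := by
    funext i; congr 1; push_cast; ring
  have hs_tail : Summable (fun i : ℕ => v ((i:ℝ) + (r_up:ℝ) + 1) l) := by
    rw [← htail_eq]
    exact (summable_nat_add_iff r_up).2 hsumf
  have htail := tail_bound hl (r_up:ℝ) (Nat.cast_nonneg _) cond_up hs_tail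
  have hwconv : -w ((r_up:ℝ)+1) l = ((r_up:ℝ)+1) * Real.exp (-2*((r_up:ℝ)+1)^2*l^2) := by
    rw [w]; ring
  have htail_sum_eq : ∑' i : ℕ, v ((↑(i + r_up):ℝ) + 1) l
      = ∑' i : ℕ, v ((i:ℝ) + (r_up:ℝ) + 1) l := by rw [htail_eq]
  have hfront : ∑ i ∈ Finset.range r_up, v ((i:ℝ)+1) l
      = ∑ i ∈ Finset.range r_lo, v ((i:ℝ)+1) l + v ((r_up:ℝ)) l := by
    rw [hupeq, Finset.sum_range_succ]
    congr 2
    push_cast; ring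
  have hif : (if 1 ≤ r_lo then w ((r_lo : ℝ) - 1) l + v r_lo l else 0)
      ≤ ∑ i ∈ Finset.range r_lo, v ((i:ℝ)+1) l := by
    by_cases hcase : 1 ≤ r_lo
    · rw [if_pos hcase]
      obtain ⟨m, rfl⟩ : ∃ m, r_lo = m + 1 := ⟨r_lo - 1, by omega⟩
      have cond' : 2 * ((m:ℝ) + 1) ^ 2 * l ^ 2 ≤ 3/2 := by push_cast at cond_lo; linarith
      have := low_bound hl m cond'
      have e1 : ((m+1:ℕ):ℝ) - 1 = (m:ℝ) := by push_cast; ring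
      have e2 : ((m+1:ℕ):ℝ) = (m:ℝ) + 1 := by push_cast; ring
      rw [e1, e2]
      exact this
    · rw [if_neg hcase]
      have : r_lo = 0 := by omega
      simp [this]
  have key : (if 1 ≤ r_lo then w ((r_lo : ℝ) - 1) l + v r_lo l else 0) + v r_up l
        + ((r_up : ℝ) + 1) * Real.exp (-2 * ((r_up : ℝ) + 1) ^ 2 * l ^ 2)
      ≤ (∑' j : ℕ, v ((j : ℝ) + 1) l) := by
    rw [← hsplit, hfront]
    rw [htail_sum_eq]
    linarith [htail, hwconv]
  exact ⟨key, by linarith⟩
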